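/- In a group B, let M be a submonoid generated by a set S of elements all of which are mapped to 1 by a group homomorphism l: B → ℤ (in fact l(s) = 1 for all s ∈ S). Then left divisibility in M (m ≼ m' iff there exists m'' ∈ M with m m'' = m') is a partial order on M. -/
import Mathlib


/-- In a group `B`, if `M` is the submonoid generated by a set `S` of elements of
length `1` for a length homomorphism `l : B → ℤ`, then left divisibility in `M` is
reflexive, transitive and antisymmetric, i.e. a partial order on `M`. -/
theorem leftDvd_partialOrder {B : Type*} [Group B] (l : B → ℤ)
    (hl : ∀ a b : B, l (a * b) = l a + l b) (S : Set B) (hS : ∀ s ∈ S, l s = 1) :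
    let M := Submonoid.closure S
    let r : B → B → Prop := fun a b => ∃ c ∈ M, a * c = b
    (∀ m ∈ M, r m m) ∧
    (∀ a b c : B, r a b → r b c → r a c) ∧
    (∀ a b : B, a ∈ M → b ∈ M → r a b → r b a → a = b) := by
  intro M r
  have hl1 : l 1 = 0 := by
    have := hl 1 1
    simp at this
    linarith
  have key : ∀ m ∈ M, 0 ≤ l m ∧ (l m = 0 → m = 1) := by
    intro m hm
    induction hm using Submonoid.closure_induction with
    | mem s hs => exact ⟨by rw [hS s hs]; norm_num, by rw [hS s hs]; intro h; omega⟩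
    | one => exact ⟨by rw [hl1], fun _ => rfl⟩
    | mul a b _ _ ha hb =>
      constructor
      · rw [hl a b]; linarith [ha.1, hb.1]
      · intro h
        rw [hl a b] at h
        have ha0 : l a = 0 := by linarith [ha.1, hb.1]
        have hb0 : l b = 0 := by linarith [ha.1, hb.1]
        rw [ha.2 ha0, hb.2 hb0, one_mul]
  refine ⟨fun m _ => ⟨1, Submonoid.one_mem M, mul_one m⟩, ?_, ?_⟩
  · rintro a b c ⟨x, hx, rfl⟩ ⟨y, hy, rfl⟩
    exact ⟨x * y, Submonoid.mul_mem M hx hy, (mul_assoc a x y).symm⟩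
  · rintro a b _ _ ⟨x, hx, rfl⟩ ⟨y, hy, hy2⟩
    have hxy : x * y = 1 := by
      have : a * (x * y) = a * 1 := by rw [← mul_assoc, hy2, mul_one]
      exact mul_left_cancel this
    have hx0 : l x = 0 := by
      have h1 := (key x hx).1
      have h2 := (key y hy).1
      have := hl x y
      rw [hxy, hl1] at this
      linarith
    rw [(key x hx).2 hx0, mul_one]
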